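/- Let q = 3⁵ and let K be a finite field with q² = 3¹⁰ elements with F its subfield of order q. Fix ξ ∈ K \ F and write each x ∈ K uniquely as x = x₀ + x₁ξ with x₀, x₁ ∈ F. Define f : K → K by f(x₀ + x₁ξ) = (x₀² + x₁¹⁸) + (2x₀x₁ + x₁⁵⁴)ξ (the planar function of the Penttila–Williams semifield). Then for all a, b ∈ K the number of x ∈ K with f(x+a) − b ∈ ξF equals 1 if b ∈ ξF and equals q+1 if b ∉ ξF; hence U_ξ = {(x, tξ) : x ∈ K, t ∈ F} ∪ {(∞)} is a unital in the Penttila–Williams semifield plane Π(f). -/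

import Mathlib

/-- The point set of the shift plane `Π(f)`: affine points `(x,y)`, points at
infinity `(a)` for `a ∈ K`, and the point `(∞)`. -/
abbrev ShiftPt (K : Type) : Type := (K × K) ⊕ (K ⊕ Unit)

/-- The affine line `L_{a,b} = {(x, f(x+a) − b) : x ∈ K} ∪ {(a)}` of the shift plane. -/
def affLine (K : Type) [Field K] (f : K → K) (a b : K) : Set (ShiftPt K) :=
  {P | (∃ x : K, P = Sum.inl (x, f (x + a) - b)) ∨ P = Sum.inr (Sum.inl a)}

/-- The vertical line `N_a = {(a,y) : y ∈ K} ∪ {(∞)}` of the shift plane. -/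
def vertLine (K : Type) [Field K] (a : K) : Set (ShiftPt K) :=
  {P | (∃ y : K, P = Sum.inl (a, y)) ∨ P = Sum.inr (Sum.inr ())}

/-- The line at infinity of the shift plane. -/
def lineAtInf (K : Type) : Set (ShiftPt K) :=
  {P | ∃ s : K ⊕ Unit, P = Sum.inr s}

/-- The set of all lines of the shift plane `Π(f)`. -/
def shiftLines (K : Type) [Field K] (f : K → K) : Set (Set (ShiftPt K)) :=
  {L | (∃ a b : K, L = affLine K f a b) ∨ (∃ a : K, L = vertLine K a) ∨ L = lineAtInf K}

/-- The set `θF = {tθ : t ∈ F}`, where `F = {t : t^q = t}` is the subfield of order `q`. -/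
def scalarSet (K : Type) [Field K] (q : ℕ) (θ : K) : Set K :=
  {c | ∃ t : K, t ^ q = t ∧ c = t * θ}

/-- The point set `U_θ = {(x, tθ) : x ∈ K, t ∈ F} ∪ {(∞)}`. -/
def unitalSet (K : Type) [Field K] (q : ℕ) (θ : K) : Set (ShiftPt K) :=
  {P | (∃ x t : K, t ^ q = t ∧ P = Sum.inl (x, t * θ)) ∨ P = Sum.inr (Sum.inr ())}

section Aux

open Polynomial Finset
open scoped Classical

set_option linter.unusedSectionVars false

variable {K : Type} [Field K] [Fintype K]

lemma aux_char (hcard : Fintype.card K = 59049) : CharP K 3 := by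
  haveI : CharP K (ringChar K) := ringChar.charP K
  obtain ⟨n, hp, hc⟩ := FiniteField.card K (ringChar K)
  have hdvd : ringChar K ∣ 59049 := by
    rw [hcard] at hc
    exact hc ▸ dvd_pow_self (ringChar K) n.2.ne'
  have h3 : ringChar K = 3 := by
    have hd : ringChar K ∣ 3 := by
      have h10 : (59049 : ℕ) = 3 ^ 10 := by norm_num
      exact hp.dvd_of_dvd_pow (h10 ▸ hdvd)
    rcases (Nat.le_of_dvd (by norm_num) hd) with _
    interval_cases h : ringChar K <;> revert hd hp <;> decide
  exact h3 ▸ ringChar.charP K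

lemma aux_root_bound (n : ℕ) (hn : 0 < n) (c : K) :
    ((Finset.univ : Finset K).filter (fun z => z ^ n = c)).card ≤ n := by
  classical
  have h1 : ((Finset.univ : Finset K).filter (fun z => z ^ n = c)) ⊆
      (Polynomial.nthRoots n c).toFinset := by
    intro z hz
    simp only [Finset.mem_filter] at hz
    rw [Multiset.mem_toFinset, Polynomial.mem_nthRoots hn]
    exact hz.2
  calc ((Finset.univ : Finset K).filter (fun z => z ^ n = c)).card
      ≤ (Polynomial.nthRoots n c).toFinset.card := Finset.card_le_card h1
    _ ≤ Multiset.card (Polynomial.nthRoots n c) := Multiset.toFinset_card_le _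
    _ ≤ n := Polynomial.card_nthRoots n c

lemma aux_count (hcard : Fintype.card K = 59049) :
    ((Finset.univ : Finset K).filter (fun t => t ^ 243 = t)).card = 243 ∧
    ∀ c : K, c ^ 243 = c → c ≠ 0 →
      ((Finset.univ : Finset K).filter (fun z => z ^ 244 = c)).card = 244 := by
  classical
  set Fq : Finset K := (Finset.univ : Finset K).filter (fun t => t ^ 243 = t) with hFq
  set fib : K → Finset K := fun c => (Finset.univ : Finset K).filter (fun z => z ^ 244 = c)
    with hfibdef
  have hpowcard : ∀ z : K, z ^ 59049 = z := by
    intro z; have := FiniteField.pow_card z; rwa [hcard] at this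
  have hNmem : ∀ z : K, (z ^ 244) ^ 243 = z ^ 244 := by
    intro z
    have : (z ^ 244) ^ 243 = z ^ 59049 * z ^ 243 := by
      rw [← pow_mul, ← pow_add]
    rw [this, hpowcard, ← pow_succ']
  have htotal : ∑ c ∈ Fq, (fib c).card = 59049 := by
    have := Finset.card_eq_sum_card_fiberwise (f := fun z : K => z ^ 244)
      (s := Finset.univ) (t := Fq) (fun x _ => by
        simp only [hFq, Finset.mem_coe, Finset.mem_filter, Finset.mem_univ, true_and]; exact hNmem x)
    rw [Finset.card_univ, hcard] at this
    exact this.symm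
  have h0F : (0 : K) ∈ Fq := by simp [hFq]
  have hfib0 : (fib 0).card = 1 := by
    have : fib 0 = {0} := by
      ext z
      simp only [hfibdef, Finset.mem_filter, Finset.mem_univ, true_and, Finset.mem_singleton]
      constructor
      · intro h; exact pow_eq_zero_iff (by norm_num) |>.mp h
      · rintro rfl; simp
    rw [this]; rfl
  have hbound : ∀ c : K, (fib c).card ≤ 244 := fun c => aux_root_bound 244 (by norm_num) c
  have hFle : Fq.card ≤ 243 := by
    have hsub : Fq ⊆ insert 0 ((Finset.univ : Finset K).filter (fun z => z ^ 242 = 1)) := by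
      intro t ht
      simp only [hFq, Finset.mem_filter, Finset.mem_univ, true_and] at ht
      rcases eq_or_ne t 0 with rfl | htne
      · exact Finset.mem_insert_self _ _
      · refine Finset.mem_insert_of_mem ?_
        simp only [Finset.mem_filter, Finset.mem_univ, true_and]
        have : t ^ 242 * t = 1 * t := by
          rw [one_mul, ← pow_succ]; exact ht
        exact mul_right_cancel₀ htne this
    calc Fq.card ≤ _ := Finset.card_le_card hsub
      _ ≤ 1 + 242 := by
          refine (Finset.card_insert_le _ _).trans ?_
          have := aux_root_bound (K := K) 242 (by norm_num) 1
          omega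
      _ = 243 := rfl
  have hsplit : (fib 0).card + ∑ c ∈ Fq.erase 0, (fib c).card = ∑ c ∈ Fq, (fib c).card :=
    Finset.add_sum_erase _ (fun c => (fib c).card) h0F
  have herase : ∑ c ∈ Fq.erase 0, (fib c).card = 59048 := by omega
  have hFcard : Fq.card = 243 := by
    have hle : (59048 : ℕ) ≤ (Fq.erase 0).card * 244 := by
      have := Finset.sum_le_card_nsmul (Fq.erase 0) (fun c => (fib c).card) 244
        (fun c _ => hbound c)
      simpa [smul_eq_mul, herase] using this
    have hcerase : (Fq.erase 0).card = Fq.card - 1 := Finset.card_erase_of_mem h0F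
    have h1le : 1 ≤ Fq.card := Finset.card_pos.mpr ⟨0, h0F⟩
    omega
  refine ⟨hFcard, fun c hcF hc0 => ?_⟩
  have hcmem : c ∈ Fq.erase 0 := by
    simp only [Finset.mem_erase, hFq, Finset.mem_filter, Finset.mem_univ, true_and]
    exact ⟨hc0, hcF⟩
  by_contra hne
  have hlt : (fib c).card < 244 := lt_of_le_of_ne (hbound c) hne
  have : ∑ x ∈ Fq.erase 0, (fib x).card < ∑ _x ∈ Fq.erase 0, 244 :=
    Finset.sum_lt_sum (fun i _ => hbound i) ⟨c, hcmem, hlt⟩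
  rw [Finset.sum_const, smul_eq_mul, Finset.card_erase_of_mem h0F, hFcard] at this
  omega

lemma aux_ncard_filter (p : K → Prop) :
    {x : K | p x}.ncard = ((Finset.univ : Finset K).filter p).card := by
  classical
  rw [Set.ncard_eq_toFinset_card', Set.toFinset_setOf]

lemma aux_addpow [CharP K 3] (a b : K) : (a + b) ^ 243 = a ^ 243 + b ^ 243 := by
  haveI := Fact.mk (by norm_num : Nat.Prime 3)
  have h := add_pow_char_pow a b 3 5
  norm_num at h
  exact h

lemma aux_subpow [CharP K 3] (a b : K) : (a - b) ^ 243 = a ^ 243 - b ^ 243 := by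
  haveI := Fact.mk (by norm_num : Nat.Prime 3)
  have h := sub_pow_char_pow (p := 3) (n := 5) (x := a) (y := b)
  norm_num at h
  exact h

lemma aux_pow27inj [CharP K 3] (a b : K) (h : a ^ 27 = b ^ 27) : a = b := by
  haveI := Fact.mk (by norm_num : Nat.Prime 3)
  have h3 : (a - b) ^ 27 = 0 := by
    have h2 := sub_pow_char_pow (p := 3) (n := 3) (x := a) (y := b)
    norm_num at h2
    rw [h2, h, sub_self]
  exact sub_eq_zero.mp (pow_eq_zero_iff (by norm_num : (27:ℕ) ≠ 0) |>.mp h3)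

lemma aux_decomp (hcard : Fintype.card K = 59049) [CharP K 3] (θ : K) (hθ : θ ^ 243 ≠ θ) :
    (∀ s t s' t' : K, s ^ 243 = s → t ^ 243 = t → s' ^ 243 = s' → t' ^ 243 = t' →
      s + t * θ = s' + t' * θ → s = s' ∧ t = t') ∧
    (∀ x : K, ∃ s t : K, s ^ 243 = s ∧ t ^ 243 = t ∧ x = s + t * θ) := by
  classical
  have hinj : ∀ s t s' t' : K, s ^ 243 = s → t ^ 243 = t → s' ^ 243 = s' → t' ^ 243 = t' →
      s + t * θ = s' + t' * θ → s = s' ∧ t = t' := by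
    intro s t s' t' hs ht hs' ht' heq
    by_cases htt : t = t'
    · subst htt
      refine ⟨?_, rfl⟩
      exact add_right_cancel heq
    · exfalso
      apply hθ
      have hd : t' - t ≠ 0 := sub_ne_zero.mpr (Ne.symm htt)
      have hθval : θ = (s - s') / (t' - t) := by
        rw [eq_div_iff hd]
        linear_combination -heq
      rw [hθval, div_pow, aux_subpow, aux_subpow, hs, hs', ht, ht']
  refine ⟨hinj, ?_⟩
  let F := {t : K // t ^ 243 = t}
  have hFcard : Fintype.card F = 243 := by
    rw [Fintype.card_subtype]
    exact (aux_count hcard).1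
  let g : F × F → K := fun p => p.1.1 + p.2.1 * θ
  have hginj : Function.Injective g := by
    rintro ⟨⟨s, hs⟩, ⟨t, ht⟩⟩ ⟨⟨s', hs'⟩, ⟨t', ht'⟩⟩ h
    obtain ⟨h1, h2⟩ := hinj s t s' t' hs ht hs' ht' h
    simp only [Prod.mk.injEq]
    exact ⟨Subtype.ext h1, Subtype.ext h2⟩
  have hgbij : Function.Bijective g := by
    rw [Fintype.bijective_iff_injective_and_card]
    exact ⟨hginj, by rw [Fintype.card_prod, hFcard, hcard]⟩
  intro x
  obtain ⟨⟨⟨s, hs⟩, ⟨t, ht⟩⟩, hx⟩ := hgbij.2 x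
  exact ⟨s, t, hs, ht, hx.symm⟩

lemma aux_main (hcard : Fintype.card K = 59049) [CharP K 3] (ξ : K) (hξ : ξ ^ 243 ≠ ξ)
    (f : K → K)
    (hf : ∀ x0 x1 : K, x0 ^ 243 = x0 → x1 ^ 243 = x1 →
      f (x0 + x1 * ξ) = (x0 ^ 2 + x1 ^ 18) + (2 * x0 * x1 + x1 ^ 54) * ξ) :
    ∀ a b : K,
      (b ∈ scalarSet K 243 ξ → {x : K | f (x + a) - b ∈ scalarSet K 243 ξ}.ncard = 1) ∧
      (b ∉ scalarSet K 243 ξ → {x : K | f (x + a) - b ∈ scalarSet K 243 ξ}.ncard = 244) := by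
  classical
  haveI := Fact.mk (by norm_num : Nat.Prime 3)
  obtain ⟨hFcard, hfib⟩ := aux_count hcard
  obtain ⟨huniq, hsurj⟩ := aux_decomp hcard ξ hξ
  have hF0 : (0 : K) ^ 243 = 0 := by norm_num
  have hF2 : (2 : K) ^ 243 = 2 := by
    have h12 : (2 : K) = 1 + 1 := by norm_num
    rw [h12, aux_addpow, one_pow]
  have hFpow : ∀ (u : K) (n : ℕ), u ^ 243 = u → (u ^ n) ^ 243 = u ^ n := by
    intro u n hu
    rw [pow_right_comm, hu]
  -- square root of -1
  have hsq : IsSquare (-1 : K) := by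
    rw [FiniteField.isSquare_neg_one_iff, hcard]
    norm_num
  obtain ⟨i0, hi0⟩ := hsq
  have hi2 : i0 ^ 2 = -1 := by rw [sq]; exact hi0.symm
  have hi0ne : i0 ≠ 0 := by
    intro h
    rw [h] at hi2
    norm_num at hi2
  have h2ne : (2 : K) ≠ 0 := by
    intro h
    have := (CharP.cast_eq_zero_iff K 3 2).mp (by exact_mod_cast h)
    norm_num at this
  have hiq : i0 ^ 243 = -i0 := by
    have h1 : i0 ^ 243 = (i0 ^ 2) ^ 121 * i0 := by ring
    have h2 : (-1 : K) ^ 121 = -1 := Odd.neg_one_pow ⟨60, by norm_num⟩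
    rw [h1, hi2, h2]
    ring
  have hi0F : i0 ^ 243 ≠ i0 := by
    rw [hiq]
    intro h
    have h20 : (2 : K) * i0 = 0 := by linear_combination -h
    rcases mul_eq_zero.mp h20 with h | h
    · exact h2ne h
    · exact hi0ne h
  obtain ⟨huniqI, hsurjI⟩ := aux_decomp hcard i0 hi0F
  -- norm computation
  have hnorm : ∀ u w : K, u ^ 243 = u → w ^ 243 = w →
      (u + w * i0) ^ 244 = u ^ 2 + w ^ 2 := by
    intro u w hu hw
    have h1 : (u + w * i0) ^ 244 = (u + w * i0) ^ 243 * (u + w * i0) := by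
      rw [← pow_succ]
    rw [h1, aux_addpow, mul_pow, hu, hw, hiq]
    have h2 : (u + w * -i0) * (u + w * i0) = u ^ 2 - w ^ 2 * i0 ^ 2 := by ring
    rw [h2, hi2]
    ring
  have hZcard1 : {z : K | z ^ 244 = (0:K)}.ncard = 1 := by
    have : {z : K | z ^ 244 = (0:K)} = {0} := by
      ext z
      simp only [Set.mem_setOf_eq, Set.mem_singleton_iff]
      constructor
      · intro h; exact pow_eq_zero_iff (by norm_num : (244:ℕ) ≠ 0) |>.mp h
      · rintro rfl; norm_num
    rw [this, Set.ncard_singleton]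
  have hZcard : ∀ c : K, c ^ 243 = c → c ≠ 0 → {z : K | z ^ 244 = c}.ncard = 244 := by
    intro c hc hc0
    rw [aux_ncard_filter]
    exact hfib c hc hc0
  intro a b
  obtain ⟨b0, b1, hb0, hb1, hbdec⟩ := hsurj b
  set S := {x : K | f (x + a) - b ∈ scalarSet K 243 ξ} with hS
  set T : Set (K × K) := {p | p.1 ^ 243 = p.1 ∧ p.2 ^ 243 = p.2 ∧ p.1 ^ 2 + p.2 ^ 2 = b0} with hT
  have hS_eq : S = (fun p : K × K => p.1 + p.2 ^ 27 * ξ - a) '' T := by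
    ext x
    simp only [hS, hT, Set.mem_setOf_eq, Set.mem_image, Prod.exists, scalarSet]
    constructor
    · rintro ⟨t, htF, hteq⟩
      obtain ⟨u0, u1, hu0, hu1, hxa⟩ := hsurj (x + a)
      have hfval := hf u0 u1 hu0 hu1
      rw [← hxa] at hfval
      have hkey : (u0 ^ 2 + u1 ^ 18 - b0) + ((2 * u0 * u1 + u1 ^ 54) - b1) * ξ = 0 + t * ξ := by
        rw [hbdec] at hteq
        linear_combination hteq - hfval
      have hA : (u0 ^ 2 + u1 ^ 18 - b0) ^ 243 = u0 ^ 2 + u1 ^ 18 - b0 := by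
        rw [aux_subpow, aux_addpow, hFpow _ _ hu0, hFpow _ _ hu1, hb0]
      have hB : ((2 * u0 * u1 + u1 ^ 54) - b1) ^ 243 = (2 * u0 * u1 + u1 ^ 54) - b1 := by
        rw [aux_subpow, aux_addpow, hFpow _ _ hu1, hb1]
        congr 1
        rw [mul_pow, mul_pow, hF2, hu0, hu1]
      obtain ⟨hA0, _⟩ := huniq _ _ _ _ hA hB hF0 htF hkey
      refine ⟨u0, u1 ^ 9, ⟨hu0, hFpow _ 9 hu1, ?_⟩, ?_⟩
      · have h9 : (u1 ^ 9) ^ 2 = u1 ^ 18 := by ring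
        rw [h9]
        linear_combination hA0
      · have h243 : (u1 ^ 9) ^ 27 = u1 := by
          rw [← pow_mul]
          norm_num
          exact hu1
        rw [h243]
        linear_combination -hxa
    · rintro ⟨u, w, ⟨huF, hwF, hsum⟩, rfl⟩
      have hw27 : (w ^ 27) ^ 243 = w ^ 27 := hFpow _ _ hwF
      have hxa : (u + w ^ 27 * ξ - a) + a = u + w ^ 27 * ξ := by ring
      rw [hxa, hf u (w ^ 27) huF hw27]
      refine ⟨2 * u * w ^ 27 + (w ^ 27) ^ 54 - b1, ?_, ?_⟩
      · rw [aux_subpow, aux_addpow, hb1, hFpow _ _ hw27]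
        congr 2
        rw [mul_pow, mul_pow, hF2, huF, hw27]
      · have h18 : (w ^ 27) ^ 18 = w ^ 2 := by
          rw [← pow_mul]
          have h486 : w ^ (27 * 18) = (w ^ 243) ^ 2 := by ring
          rw [h486, hwF]
        rw [hbdec, h18]
        linear_combination hsum
  have hS_ncard : S.ncard = T.ncard := by
    rw [hS_eq]
    apply Set.ncard_image_of_injOn
    rintro ⟨u, w⟩ hu ⟨u', w'⟩ hu' heq
    simp only [hT, Set.mem_setOf_eq] at hu hu'
    have heq2 : u + w ^ 27 * ξ = u' + w' ^ 27 * ξ := by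
      have := heq
      simp only at this
      linear_combination this
    obtain ⟨h1, h2⟩ := huniq u (w ^ 27) u' (w' ^ 27)
      hu.1 (hFpow _ _ hu.2.1) hu'.1 (hFpow _ _ hu'.2.1) heq2
    have h3 : w = w' := aux_pow27inj w w' h2
    simp [h1, h3]
  have hZ_eq : {z : K | z ^ 244 = b0} = (fun p : K × K => p.1 + p.2 * i0) '' T := by
    ext z
    simp only [hT, Set.mem_setOf_eq, Set.mem_image, Prod.exists]
    constructor
    · intro hz
      obtain ⟨u, w, hu, hw, rfl⟩ := hsurjI z
      refine ⟨u, w, ⟨hu, hw, ?_⟩, rfl⟩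
      rw [← hnorm u w hu hw]
      exact hz
    · rintro ⟨u, w, ⟨hu, hw, hsum⟩, rfl⟩
      rw [hnorm u w hu hw]
      exact hsum
  have hT_ncard : T.ncard = {z : K | z ^ 244 = b0}.ncard := by
    rw [hZ_eq]
    refine (Set.ncard_image_of_injOn ?_).symm
    rintro ⟨u, w⟩ hu ⟨u', w'⟩ hu' heq
    simp only [hT, Set.mem_setOf_eq] at hu hu'
    simp only at heq
    obtain ⟨h1, h2⟩ := huniqI u w u' w' hu.1 hu.2.1 hu'.1 hu'.2.1 heq
    simp [h1, h2]
  have hkeycard : S.ncard = {z : K | z ^ 244 = b0}.ncard := hS_ncard.trans hT_ncard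
  have hb0mem : b ∈ scalarSet K 243 ξ ↔ b0 = 0 := by
    constructor
    · rintro ⟨t, htF, hbt⟩
      have heq : b0 + b1 * ξ = 0 + t * ξ := by
        rw [← hbdec, hbt]
        ring
      exact (huniq b0 b1 0 t hb0 hb1 hF0 htF heq).1
    · intro h
      exact ⟨b1, hb1, by rw [hbdec, h]; ring⟩
  constructor
  · intro hb
    have hb00 : b0 = 0 := hb0mem.mp hb
    rw [hkeycard, hb00]
    exact hZcard1
  · intro hb
    have hb00 : b0 ≠ 0 := fun h => hb (hb0mem.mpr h)
    rw [hkeycard]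
    exact hZcard b0 hb0 hb00

end Aux

theorem stmt8 (q : ℕ) (hq : q = 3 ^ 5)
    (K : Type) [Field K] [Fintype K] (hcard : Fintype.card K = q ^ 2)
    (ξ : K) (hξ : ξ ^ q ≠ ξ)
    (f : K → K)
    (hf : ∀ x0 x1 : K, x0 ^ q = x0 → x1 ^ q = x1 →
      f (x0 + x1 * ξ) = (x0 ^ 2 + x1 ^ 18) + (2 * x0 * x1 + x1 ^ 54) * ξ) :
    (∀ a b : K,
      (b ∈ scalarSet K q ξ → {x : K | f (x + a) - b ∈ scalarSet K q ξ}.ncard = 1) ∧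
      (b ∉ scalarSet K q ξ → {x : K | f (x + a) - b ∈ scalarSet K q ξ}.ncard = q + 1)) ∧
    (∀ L ∈ shiftLines K f,
      (L ∩ unitalSet K q ξ).ncard = 1 ∨ (L ∩ unitalSet K q ξ).ncard = q + 1) := by
  classical
  have h35 : q = 243 := by rw [hq]; norm_num
  subst h35
  have hcard' : Fintype.card K = 59049 := by rw [hcard]; norm_num
  haveI := aux_char hcard'
  have hmain := aux_main hcard' ξ hξ f hf
  have hξ0 : ξ ≠ 0 := by
    intro h
    apply hξ
    rw [h]
    norm_num
  obtain ⟨hFcard, _⟩ := aux_count hcard'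
  have hFncard : {t : K | t ^ 243 = t}.ncard = 243 := by
    rw [aux_ncard_filter]
    exact hFcard
  constructor
  · intro a b
    refine ⟨(hmain a b).1, fun hb => ((hmain a b).2 hb).trans (by norm_num)⟩
  · intro L hL
    rcases hL with ⟨a, b, rfl⟩ | ⟨a, rfl⟩ | rfl
    · -- affine line
      have himg : affLine K f a b ∩ unitalSet K 243 ξ =
          (fun x : K => (Sum.inl (x, f (x + a) - b) : ShiftPt K)) ''
            {x : K | f (x + a) - b ∈ scalarSet K 243 ξ} := by
        ext P
        simp only [affLine, unitalSet, scalarSet, Set.mem_inter_iff, Set.mem_setOf_eq,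
          Set.mem_image]
        constructor
        · rintro ⟨h1, h2⟩
          rcases h1 with ⟨x, rfl⟩ | rfl
          · rcases h2 with ⟨x', t, htF, hPt⟩ | hP
            · obtain ⟨hx, hy⟩ : x = x' ∧ f (x + a) - b = t * ξ := by
                simpa using hPt
              exact ⟨x, ⟨t, htF, hy⟩, rfl⟩
            · simp at hP
          · rcases h2 with ⟨x', t, htF, hPt⟩ | hP
            · simp at hPt
            · simp at hP
        · rintro ⟨x, ⟨t, htF, hty⟩, rfl⟩
          exact ⟨Or.inl ⟨x, rfl⟩, Or.inl ⟨x, t, htF, by rw [hty]⟩⟩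
      rw [himg, Set.ncard_image_of_injective _ (fun x y h => by
        simp only [Sum.inl.injEq, Prod.mk.injEq] at h
        exact h.1)]
      by_cases hb : b ∈ scalarSet K 243 ξ
      · left
        exact (hmain a b).1 hb
      · right
        exact ((hmain a b).2 hb).trans (by norm_num)
    · -- vertical line
      right
      have himg : vertLine K a ∩ unitalSet K 243 ξ =
          ((fun t : K => (Sum.inl (a, t * ξ) : ShiftPt K)) '' {t : K | t ^ 243 = t}) ∪
            {Sum.inr (Sum.inr ())} := by
        ext P
        simp only [vertLine, unitalSet, Set.mem_inter_iff, Set.mem_setOf_eq, Set.mem_union,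
          Set.mem_image, Set.mem_singleton_iff]
        constructor
        · rintro ⟨h1, h2⟩
          rcases h1 with ⟨y, rfl⟩ | rfl
          · rcases h2 with ⟨x, t, htF, hPt⟩ | hP
            · obtain ⟨hax, hy⟩ : a = x ∧ y = t * ξ := by simpa using hPt
              exact Or.inl ⟨t, htF, by rw [hy]⟩
            · simp at hP
          · exact Or.inr rfl
        · rintro (⟨t, htF, rfl⟩ | rfl)
          · exact ⟨Or.inl ⟨t * ξ, rfl⟩, Or.inl ⟨a, t, htF, rfl⟩⟩
          · exact ⟨Or.inr rfl, Or.inr rfl⟩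
      rw [himg]
      have hdisj : Disjoint
          ((fun t : K => (Sum.inl (a, t * ξ) : ShiftPt K)) '' {t : K | t ^ 243 = t})
          ({Sum.inr (Sum.inr ())} : Set (ShiftPt K)) := by
        rw [Set.disjoint_left]
        rintro P ⟨t, _, rfl⟩ hP
        simp at hP
      rw [Set.ncard_union_eq hdisj (Set.toFinite _) (Set.toFinite _),
        Set.ncard_image_of_injective _ (fun x y h => by
          simp only [Sum.inl.injEq, Prod.mk.injEq] at h
          exact mul_right_cancel₀ hξ0 h.2),
        hFncard, Set.ncard_singleton]
    · -- line at infinity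
      left
      have heq : lineAtInf K ∩ unitalSet K 243 ξ = {Sum.inr (Sum.inr ())} := by
        ext P
        simp only [lineAtInf, unitalSet, Set.mem_inter_iff, Set.mem_setOf_eq,
          Set.mem_singleton_iff]
        constructor
        · rintro ⟨⟨s, rfl⟩, h2⟩
          rcases h2 with ⟨x, t, htF, hP⟩ | hP
          · simp at hP
          · exact hP
        · rintro rfl
          exact ⟨⟨Sum.inr (), rfl⟩, Or.inr rfl⟩
      rw [heq]
      exact Set.ncard_singleton _
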